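/- Let r ≥ 2. Then for all j, q, t ∈ {1, …, r}: E[((r²−1) − 12ρ(j)²)² ρ(j)⁴] ≤ 3r⁸/140; E[((r²−1) − 12ρ(j)²)² ρ(q)⁴] ≤ 0.02440 r⁸; E[((r²−1) − 12ρ(j)²)² ρ(j)² ρ(q)²] ≤ 0.02292 r⁸; and E[((r²−1) − 12ρ(j)²)² ρ(q)⁴ ρ(t)⁴] ≤ 0.00111 r¹². -/

import Mathlib

open MeasureTheory Finset Real

noncomputable section

instance instMSPerm (r : ℕ) : MeasurableSpace (Equiv.Perm (Fin r)) := ⊤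

/-- The law of a single uniformly random permutation of `{1, …, r}`. -/
def permMeasure (r : ℕ) : Measure (Equiv.Perm (Fin r)) :=
  (PMF.uniformOfFintype (Equiv.Perm (Fin r))).toMeasure

/-- `ρ(j) = π(j) - (r+1)/2`, where `π(j) ∈ {1, …, r}` (a permutation of `Fin r` assigns
values in `{0, …, r-1}`, hence the `+ 1`). -/
def rho1 (r : ℕ) (j : Fin r) (g : Equiv.Perm (Fin r)) : ℝ :=
  ((g j : ℕ) : ℝ) + 1 - ((r : ℝ) + 1) / 2

end


instance instMSCPerm (r : ℕ) : MeasurableSingletonClass (Equiv.Perm (Fin r)) :=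
  ⟨fun _ => trivial⟩

instance instProbPerm (r : ℕ) : IsProbabilityMeasure (permMeasure r) := by
  unfold permMeasure; infer_instance

lemma integral_permMeasure (r : ℕ) (f : Equiv.Perm (Fin r) → ℝ) :
    ∫ p, f p ∂(permMeasure r)
      = (∑ g : Equiv.Perm (Fin r), f g) / (r.factorial : ℝ) := by
  rw [integral_fintype (Integrable.of_finite)]
  rw [Finset.sum_div]
  refine Finset.sum_congr rfl fun g _ => ?_
  have h : (permMeasure r) {g} = ((r.factorial : ENNReal))⁻¹ := by
    rw [permMeasure, PMF.toMeasure_apply_singleton _ _ (measurableSet_singleton g),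
      PMF.uniformOfFintype_apply, Fintype.card_perm, Fintype.card_fin]
  rw [Measure.real, h, smul_eq_mul]
  simp [ENNReal.toReal_inv]
  ring


private lemma two_step_induction {P : ℕ → Prop} (h0 : P 0) (h1 : P 1)
    (hstep : ∀ n, P n → P (n + 2)) : ∀ n, P n := by
  have key : ∀ n, P n ∧ P (n + 1) := by
    intro n
    induction n with
    | zero => exact ⟨h0, h1⟩
    | succ k ih => exact ⟨ih.2, hstep k ih.1⟩
  exact fun n => (key n).1

private lemma sum_centered_step (m n : ℕ) :
    ∑ k ∈ Finset.range (n + 2), ((k : ℝ) + 1 - (((n : ℝ) + 2) + 1) / 2) ^ m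
      = (∑ k ∈ Finset.range n, ((k : ℝ) + 1 - ((n : ℝ) + 1) / 2) ^ m)
        + (((n : ℝ) + 1) / 2) ^ m + (-(((n : ℝ) + 1) / 2)) ^ m := by
  rw [Finset.sum_range_succ', Finset.sum_range_succ]
  have h1 : ∀ k ∈ Finset.range n,
      (((k + 1 : ℕ) : ℝ) + 1 - (((n : ℝ) + 2) + 1) / 2) ^ m
        = ((k : ℝ) + 1 - ((n : ℝ) + 1) / 2) ^ m := by
    intro k _; push_cast; ring_nf
  rw [Finset.sum_congr rfl h1]
  have h2 : (((n + 1 : ℕ) : ℝ) + 1 - (((n : ℝ) + 2) + 1) / 2) ^ m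
      = (((n : ℝ) + 1) / 2) ^ m := by push_cast; ring_nf
  have h3 : (((0 : ℕ) : ℝ) + 1 - (((n : ℝ) + 2) + 1) / 2) ^ m
      = (-(((n : ℝ) + 1) / 2)) ^ m := by push_cast; ring_nf
  rw [h2, h3]

lemma sum_rho_pow2 (n : ℕ) :
    ∑ k ∈ Finset.range n, ((k : ℝ) + 1 - ((n : ℝ) + 1) / 2) ^ 2
      = ((n : ℝ) ^ 3 - n) / 12 := by
  induction n using two_step_induction with
  | h0 => simp
  | h1 => norm_num
  | hstep n ih =>
      have := sum_centered_step 2 n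
      push_cast
      rw [show ((n : ℝ) + 2 + 1) / 2 = (((n:ℝ) + 2) + 1) / 2 by ring] at *
      rw [this, ih]
      ring

lemma sum_rho_pow4 (n : ℕ) :
    ∑ k ∈ Finset.range n, ((k : ℝ) + 1 - ((n : ℝ) + 1) / 2) ^ 4
      = (3 * (n : ℝ) ^ 5 - 10 * (n:ℝ) ^ 3 + 7 * (n:ℝ)) / 240 := by
  induction n using two_step_induction with
  | h0 => simp
  | h1 => norm_num
  | hstep n ih =>
      have := sum_centered_step 4 n
      push_cast
      rw [show ((n : ℝ) + 2 + 1) / 2 = (((n:ℝ) + 2) + 1) / 2 by ring] at *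
      rw [this, ih]
      ring

lemma sum_rho_pow6 (n : ℕ) :
    ∑ k ∈ Finset.range n, ((k : ℝ) + 1 - ((n : ℝ) + 1) / 2) ^ 6
      = (3 * (n : ℝ) ^ 7 - 21 * (n:ℝ) ^ 5 + 49 * (n:ℝ) ^ 3 - 31 * (n:ℝ)) / 1344 := by
  induction n using two_step_induction with
  | h0 => simp
  | h1 => norm_num
  | hstep n ih =>
      have := sum_centered_step 6 n
      push_cast
      rw [show ((n : ℝ) + 2 + 1) / 2 = (((n:ℝ) + 2) + 1) / 2 by ring] at *
      rw [this, ih]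
      ring

lemma sum_rho_pow8 (n : ℕ) :
    ∑ k ∈ Finset.range n, ((k : ℝ) + 1 - ((n : ℝ) + 1) / 2) ^ 8
      = (5 * (n : ℝ) ^ 9 - 60 * (n:ℝ) ^ 7 + 294 * (n:ℝ) ^ 5 - 620 * (n:ℝ) ^ 3 + 381 * (n:ℝ)) / 11520 := by
  induction n using two_step_induction with
  | h0 => simp
  | h1 => norm_num
  | hstep n ih =>
      have := sum_centered_step 8 n
      push_cast
      rw [show ((n : ℝ) + 2 + 1) / 2 = (((n:ℝ) + 2) + 1) / 2 by ring] at *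
      rw [this, ih]
      ring

lemma sum_rho_pow10 (n : ℕ) :
    ∑ k ∈ Finset.range n, ((k : ℝ) + 1 - ((n : ℝ) + 1) / 2) ^ 10
      = (3 * (n : ℝ) ^ 11 - 55 * (n:ℝ) ^ 9 + 462 * (n:ℝ) ^ 7 - 2046 * (n:ℝ) ^ 5 + 4191 * (n:ℝ) ^ 3 - 2555 * (n:ℝ)) / 33792 := by
  induction n using two_step_induction with
  | h0 => simp
  | h1 => norm_num
  | hstep n ih =>
      have := sum_centered_step 10 n
      push_cast
      rw [show ((n : ℝ) + 2 + 1) / 2 = (((n:ℝ) + 2) + 1) / 2 by ring] at *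
      rw [this, ih]
      ring

lemma sum_rho_pow12 (n : ℕ) :
    ∑ k ∈ Finset.range n, ((k : ℝ) + 1 - ((n : ℝ) + 1) / 2) ^ 12
      = (105 * (n : ℝ) ^ 13 - 2730 * (n:ℝ) ^ 11 + 35035 * (n:ℝ) ^ 9 - 265980 * (n:ℝ) ^ 7 + 1144143 * (n:ℝ) ^ 5 - 2325050 * (n:ℝ) ^ 3 + 1414477 * (n:ℝ)) / 5591040 := by
  induction n using two_step_induction with
  | h0 => simp
  | h1 => norm_num
  | hstep n ih =>
      have := sum_centered_step 12 n
      push_cast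
      rw [show ((n : ℝ) + 2 + 1) / 2 = (((n:ℝ) + 2) + 1) / 2 by ring] at *
      rw [this, ih]
      ring

lemma exists_perm_pair {α : Type*} [DecidableEq α] {k l k' l' : α}
    (hkl : k ≠ l) (hkl' : k' ≠ l') :
    ∃ τ : Equiv.Perm α, τ k = k' ∧ τ l = l' := by
  refine ⟨(Equiv.swap (Equiv.swap k k' l) l') * (Equiv.swap k k'), ?_, ?_⟩
  · simp only [Equiv.Perm.mul_apply, Equiv.swap_apply_left]
    apply Equiv.swap_apply_of_ne_of_ne
    · intro h
      have := congrArg (Equiv.swap k k') h.symm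
      rw [Equiv.swap_apply_self, Equiv.swap_apply_right] at this
      exact hkl this.symm
    · exact hkl'
  · simp only [Equiv.Perm.mul_apply, Equiv.swap_apply_left]

lemma fiber_card_pair_const {r : ℕ} {j q : Fin r}
    {k l k' l' : Fin r} (hkl : k ≠ l) (hkl' : k' ≠ l') :
    (Finset.univ.filter fun g : Equiv.Perm (Fin r) => g j = k ∧ g q = l).card
      = (Finset.univ.filter fun g : Equiv.Perm (Fin r) => g j = k' ∧ g q = l').card := by
  obtain ⟨τ, hτ1, hτ2⟩ := exists_perm_pair hkl hkl'
  refine Finset.card_nbij' (fun g => τ * g) (fun g => τ⁻¹ * g) ?_ ?_ ?_ ?_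
  · intro g hg
    simp only [Finset.mem_coe, Finset.mem_filter, Finset.mem_univ, true_and] at hg ⊢
    simp [Equiv.Perm.mul_apply, hg.1, hg.2, hτ1, hτ2]
  · intro g hg
    simp only [Finset.mem_coe, Finset.mem_filter, Finset.mem_univ, true_and] at hg ⊢
    constructor
    · simp [Equiv.Perm.mul_apply, hg.1, ← hτ1]
    · simp [Equiv.Perm.mul_apply, hg.2, ← hτ2]
  · intro g _; simp [← mul_assoc]
  · intro g _; simp [← mul_assoc]

lemma fiber_card_single_const {r : ℕ} {j : Fin r} (k k' : Fin r) :
    (Finset.univ.filter fun g : Equiv.Perm (Fin r) => g j = k).card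
      = (Finset.univ.filter fun g : Equiv.Perm (Fin r) => g j = k').card := by
  refine Finset.card_nbij' (fun g => (Equiv.swap k k') * g) (fun g => (Equiv.swap k k')⁻¹ * g)
    ?_ ?_ ?_ ?_
  · intro g hg
    simp only [Finset.mem_coe, Finset.mem_filter, Finset.mem_univ, true_and] at hg ⊢
    simp [Equiv.Perm.mul_apply, hg]
  · intro g hg
    simp only [Finset.mem_coe, Finset.mem_filter, Finset.mem_univ, true_and] at hg ⊢
    simp [Equiv.Perm.mul_apply, hg, Equiv.swap_apply_right]
  · intro g _; simp [← mul_assoc]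
  · intro g _; simp [← mul_assoc]

lemma single_avg (r : ℕ) (hr : 2 ≤ r) (j : Fin r) (F : Fin r → ℝ) :
    (∑ g : Equiv.Perm (Fin r), F (g j)) / (r.factorial : ℝ)
      = (∑ i, F i) / (r : ℝ) := by
  classical
  set k0 : Fin r := ⟨0, by omega⟩ with hk0
  set N : ℕ := (Finset.univ.filter fun g : Equiv.Perm (Fin r) => g j = k0).card with hN
  have hfib : ∀ i : Fin r,
      (Finset.univ.filter fun g : Equiv.Perm (Fin r) => g j = i).card = N :=
    fun i => fiber_card_single_const i k0
  have hsum : ∑ g : Equiv.Perm (Fin r), F (g j) = (N : ℝ) * ∑ i, F i := by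
    rw [← Finset.sum_fiberwise_of_maps_to (g := fun g : Equiv.Perm (Fin r) => g j)
      (fun g _ => Finset.mem_univ _) (fun g => F (g j))]
    rw [Finset.mul_sum]
    refine Finset.sum_congr rfl fun i _ => ?_
    rw [Finset.sum_congr rfl (fun g hg => ?_), Finset.sum_const, hfib i, nsmul_eq_mul]
    simp only [Finset.mem_filter] at hg
    rw [hg.2]
  have hNr : N * r = r.factorial := by
    have h1 : (Finset.univ : Finset (Equiv.Perm (Fin r))).card = r.factorial := by
      rw [Finset.card_univ, Fintype.card_perm, Fintype.card_fin]
    rw [← h1, Finset.card_eq_sum_card_fiberwise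
      (f := fun g : Equiv.Perm (Fin r) => g j) (t := Finset.univ)
      (fun g _ => Finset.mem_univ _)]
    rw [Finset.sum_congr rfl (fun (i : Fin r) _ => hfib i), Finset.sum_const, smul_eq_mul,
      Finset.card_univ, Fintype.card_fin, mul_comm]
  have hrpos : (0 : ℝ) < r := by positivity
  have hfpos : (0 : ℝ) < (r.factorial : ℝ) := by
    exact_mod_cast Nat.factorial_pos r
  rw [div_eq_div_iff hfpos.ne' hrpos.ne', hsum]
  have hcast : (N : ℝ) * r = (r.factorial : ℝ) := by exact_mod_cast hNr
  linear_combination (∑ i, F i) * hcast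

lemma pair_avg_le (r : ℕ) (hr : 2 ≤ r) (j q : Fin r) (hjq : j ≠ q)
    (F H : Fin r → ℝ) (hF : ∀ i, 0 ≤ F i) (hH : ∀ i, 0 ≤ H i) :
    (∑ g : Equiv.Perm (Fin r), F (g j) * H (g q)) / (r.factorial : ℝ)
      ≤ (∑ i, F i) * (∑ i, H i) / ((r : ℝ) ^ 2 - r) := by
  classical
  set k0 : Fin r := ⟨0, by omega⟩ with hk0def
  set l0 : Fin r := ⟨1, by omega⟩ with hl0def
  have hk0l0 : k0 ≠ l0 := by
    intro h
    have := congrArg Fin.val h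
    simp [hk0def, hl0def] at this
  set N : ℕ :=
    (Finset.univ.filter fun g : Equiv.Perm (Fin r) => g j = k0 ∧ g q = l0).card with hNdef
  have hpred : ∀ y : Fin r × Fin r,
      (fun g : Equiv.Perm (Fin r) => (g j, g q) = y)
        = fun g : Equiv.Perm (Fin r) => g j = y.1 ∧ g q = y.2 := by
    intro y; funext g; simp [Prod.ext_iff]
  have hfib : ∀ y : Fin r × Fin r, y.1 ≠ y.2 →
      (Finset.univ.filter fun g : Equiv.Perm (Fin r) => (g j, g q) = y).card = N := by
    intro y hy
    have heq : (Finset.univ.filter fun g : Equiv.Perm (Fin r) => (g j, g q) = y)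
        = Finset.univ.filter fun g : Equiv.Perm (Fin r) => g j = y.1 ∧ g q = y.2 :=
      Finset.filter_congr fun g _ => by simp [Prod.ext_iff]
    rw [heq]
    exact fiber_card_pair_const hy hk0l0
  have hfib0 : ∀ y : Fin r × Fin r, y.1 = y.2 →
      (Finset.univ.filter fun g : Equiv.Perm (Fin r) => (g j, g q) = y).card = 0 := by
    intro y hy
    rw [Finset.card_eq_zero, Finset.filter_eq_empty_iff]
    intro g _ hgy
    simp only [Prod.ext_iff] at hgy
    exact hjq (g.injective (by rw [hgy.1, hgy.2, ← hy]))
  have hfible : ∀ y : Fin r × Fin r,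
      (Finset.univ.filter fun g : Equiv.Perm (Fin r) => (g j, g q) = y).card ≤ N := by
    intro y
    by_cases hy : y.1 = y.2
    · rw [hfib0 y hy]; omega
    · rw [hfib y hy]
  -- sum over permutations as fiberwise sum
  have hsum : ∑ g : Equiv.Perm (Fin r), F (g j) * H (g q)
      ≤ (N : ℝ) * ((∑ i, F i) * (∑ i, H i)) := by
    rw [← Finset.sum_fiberwise_of_maps_to (g := fun g : Equiv.Perm (Fin r) => (g j, g q))
      (fun g _ => Finset.mem_univ _) (fun g => F (g j) * H (g q))]
    have hstep1 : ∀ y : Fin r × Fin r,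
        ∑ g ∈ Finset.univ.filter (fun g : Equiv.Perm (Fin r) => (g j, g q) = y),
            F (g j) * H (g q)
          = ((Finset.univ.filter fun g : Equiv.Perm (Fin r) => (g j, g q) = y).card : ℝ)
              * (F y.1 * H y.2) := by
      intro y
      rw [Finset.sum_congr rfl (fun g hg => ?_), Finset.sum_const, nsmul_eq_mul]
      simp only [Finset.mem_filter] at hg
      rw [show g j = y.1 from congrArg Prod.fst hg.2, show g q = y.2 from congrArg Prod.snd hg.2]
    rw [Finset.sum_congr rfl (fun y _ => hstep1 y)]
    calc ∑ y : Fin r × Fin r,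
            ((Finset.univ.filter fun g : Equiv.Perm (Fin r) => (g j, g q) = y).card : ℝ)
              * (F y.1 * H y.2)
        ≤ ∑ y : Fin r × Fin r, (N : ℝ) * (F y.1 * H y.2) := by
          refine Finset.sum_le_sum fun y _ => ?_
          exact mul_le_mul_of_nonneg_right (by exact_mod_cast hfible y)
            (mul_nonneg (hF _) (hH _))
      _ = (N : ℝ) * ((∑ i, F i) * (∑ i, H i)) := by
          rw [← Finset.mul_sum, Finset.sum_mul_sum, Fintype.sum_prod_type]
  -- counting: N * (r^2 - r) = r!
  have hdiagcard : (Finset.univ.filter fun y : Fin r × Fin r => y.1 = y.2).card = r := by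
    have hbij : (Finset.univ.filter fun y : Fin r × Fin r => y.1 = y.2).card
        = (Finset.univ : Finset (Fin r)).card := by
      refine Finset.card_nbij' (fun y => y.1) (fun i => (i, i)) ?_ ?_ ?_ ?_
      · intro y _; exact Finset.mem_univ _
      · intro i _; simp
      · intro y hy
        simp only [Finset.mem_coe, Finset.mem_filter] at hy
        exact Prod.ext rfl hy.2
      · intro i _; rfl
    rw [hbij, Finset.card_univ, Fintype.card_fin]
  have hoffcard : (Finset.univ.filter fun y : Fin r × Fin r => ¬ y.1 = y.2).card
      = r * r - r := by
    have h := Finset.card_filter_add_card_filter_not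
      (s := (Finset.univ : Finset (Fin r × Fin r))) (p := fun y => y.1 = y.2)
    rw [Finset.card_univ, Fintype.card_prod, Fintype.card_fin] at h
    omega
  have hNfact : N * (r * r - r) = r.factorial := by
    have h1 : (Finset.univ : Finset (Equiv.Perm (Fin r))).card = r.factorial := by
      rw [Finset.card_univ, Fintype.card_perm, Fintype.card_fin]
    rw [← h1, Finset.card_eq_sum_card_fiberwise
      (f := fun g : Equiv.Perm (Fin r) => (g j, g q)) (t := Finset.univ)
      (fun g _ => Finset.mem_univ _)]
    have hterm : ∀ y : Fin r × Fin r,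
        (Finset.univ.filter fun g : Equiv.Perm (Fin r) => (g j, g q) = y).card
          = if y.1 = y.2 then 0 else N := by
      intro y
      by_cases hy : y.1 = y.2
      · rw [if_pos hy]; exact hfib0 y hy
      · rw [if_neg hy]; exact hfib y hy
    rw [Finset.sum_congr rfl (fun y _ => hterm y), Finset.sum_ite, Finset.sum_const,
      Finset.sum_const, hoffcard]
    simp [mul_comm]
  -- conclude
  have hpos : (0 : ℝ) < (r : ℝ) ^ 2 - r := by
    have : (2 : ℝ) ≤ r := by exact_mod_cast hr
    nlinarith
  have hfpos : (0 : ℝ) < (r.factorial : ℝ) := by exact_mod_cast Nat.factorial_pos r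
  rw [div_le_div_iff₀ hfpos hpos]
  have hcast : (N : ℝ) * ((r : ℝ) ^ 2 - r) = (r.factorial : ℝ) := by
    have h2 : ((N * (r * r - r) : ℕ) : ℝ) = (r.factorial : ℝ) := by exact_mod_cast hNfact
    have h3 : r ≤ r * r := Nat.le_mul_of_pos_left r (by omega)
    push_cast [Nat.cast_sub h3] at h2
    nlinarith [h2]
  have hFH : 0 ≤ (∑ i, F i) * (∑ i, H i) :=
    mul_nonneg (Finset.sum_nonneg fun i _ => hF i) (Finset.sum_nonneg fun i _ => hH i)
  calc (∑ g : Equiv.Perm (Fin r), F (g j) * H (g q)) * ((r : ℝ) ^ 2 - r)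
      ≤ ((N : ℝ) * ((∑ i, F i) * (∑ i, H i))) * ((r : ℝ) ^ 2 - r) :=
        mul_le_mul_of_nonneg_right hsum hpos.le
    _ = ((∑ i, F i) * (∑ i, H i)) * ((N : ℝ) * ((r : ℝ) ^ 2 - r)) := by ring
    _ = (∑ i, F i) * (∑ i, H i) * (r.factorial : ℝ) := by rw [hcast]

lemma ineq_a (x : ℝ) (hx : 2 ≤ x) :
    (((x^2 - 1)^2*((3*x^5 - 10*x^3 + 7*x)/240) - 24*(x^2 - 1)*((3*x^7 - 21*x^5 + 49*x^3 - 31*x)/1344) + 144*((5*x^9 - 60*x^7 + 294*x^5 - 620*x^3 + 381*x)/11520))) / (x) ≤ 3*x^8/140 := by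
  have hx0 : (0:ℝ) ≤ x - 2 := by linarith
  have hden : (0:ℝ) < x := by nlinarith
  rw [div_le_iff₀ hden]
  nlinarith [pow_nonneg hx0 1, pow_nonneg hx0 2, pow_nonneg hx0 3, pow_nonneg hx0 4, pow_nonneg hx0 5, pow_nonneg hx0 6, pow_nonneg hx0 7, pow_nonneg hx0 8, pow_nonneg hx0 9, pow_nonneg hx0 10, pow_nonneg hx0 11, pow_nonneg hx0 12, pow_nonneg hx0 13, hx0]

lemma ineq_b (x : ℝ) (hx : 2 ≤ x) :
    (((x^2 - 1)^2*x - 24*(x^2 - 1)*(((x:ℝ)^3 - x)/12) + 144*((3*x^5 - 10*x^3 + 7*x)/240)) * ((3*x^5 - 10*x^3 + 7*x)/240)) / (x^2 - x) ≤ 0.02440*x^8 := by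
  have hx0 : (0:ℝ) ≤ x - 2 := by linarith
  have hden : (0:ℝ) < x^2 - x := by nlinarith
  rw [div_le_iff₀ hden]
  nlinarith [pow_nonneg hx0 1, pow_nonneg hx0 2, pow_nonneg hx0 3, pow_nonneg hx0 4, pow_nonneg hx0 5, pow_nonneg hx0 6, pow_nonneg hx0 7, pow_nonneg hx0 8, pow_nonneg hx0 9, pow_nonneg hx0 10, pow_nonneg hx0 11, pow_nonneg hx0 12, pow_nonneg hx0 13, hx0]

lemma ineq_c (x : ℝ) (hx : 2 ≤ x) :
    (((x^2 - 1)^2*(((x:ℝ)^3 - x)/12) - 24*(x^2 - 1)*((3*x^5 - 10*x^3 + 7*x)/240) + 144*((3*x^7 - 21*x^5 + 49*x^3 - 31*x)/1344)) * (((x:ℝ)^3 - x)/12)) / (x^2 - x) ≤ 0.02292*x^8 := by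
  have hx0 : (0:ℝ) ≤ x - 2 := by linarith
  have hden : (0:ℝ) < x^2 - x := by nlinarith
  rw [div_le_iff₀ hden]
  nlinarith [pow_nonneg hx0 1, pow_nonneg hx0 2, pow_nonneg hx0 3, pow_nonneg hx0 4, pow_nonneg hx0 5, pow_nonneg hx0 6, pow_nonneg hx0 7, pow_nonneg hx0 8, pow_nonneg hx0 9, pow_nonneg hx0 10, pow_nonneg hx0 11, pow_nonneg hx0 12, pow_nonneg hx0 13, hx0]

lemma ineq_d1 (x : ℝ) (hx : 2 ≤ x) :
    (((x^2 - 1)^2*((5*x^9 - 60*x^7 + 294*x^5 - 620*x^3 + 381*x)/11520) - 24*(x^2 - 1)*((3*x^11 - 55*x^9 + 462*x^7 - 2046*x^5 + 4191*x^3 - 2555*x)/33792) + 144*((105*x^13 - 2730*x^11 + 35035*x^9 - 265980*x^7 + 1144143*x^5 - 2325050*x^3 + 1414477*x)/5591040))) / (x) ≤ 0.00111*x^12 := by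
  have hx0 : (0:ℝ) ≤ x - 2 := by linarith
  have hden : (0:ℝ) < x := by nlinarith
  rw [div_le_iff₀ hden]
  nlinarith [pow_nonneg hx0 1, pow_nonneg hx0 2, pow_nonneg hx0 3, pow_nonneg hx0 4, pow_nonneg hx0 5, pow_nonneg hx0 6, pow_nonneg hx0 7, pow_nonneg hx0 8, pow_nonneg hx0 9, pow_nonneg hx0 10, pow_nonneg hx0 11, pow_nonneg hx0 12, pow_nonneg hx0 13, hx0]

lemma ineq_d2 (x : ℝ) (hx : 2 ≤ x) :
    (((x^2 - 1)^2*x - 24*(x^2 - 1)*(((x:ℝ)^3 - x)/12) + 144*((3*x^5 - 10*x^3 + 7*x)/240)) * ((5*x^9 - 60*x^7 + 294*x^5 - 620*x^3 + 381*x)/11520)) / (x^2 - x) ≤ 0.00111*x^12 := by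
  have hx0 : (0:ℝ) ≤ x - 2 := by linarith
  have hden : (0:ℝ) < x^2 - x := by nlinarith
  rw [div_le_iff₀ hden]
  nlinarith [pow_nonneg hx0 1, pow_nonneg hx0 2, pow_nonneg hx0 3, pow_nonneg hx0 4, pow_nonneg hx0 5, pow_nonneg hx0 6, pow_nonneg hx0 7, pow_nonneg hx0 8, pow_nonneg hx0 9, pow_nonneg hx0 10, pow_nonneg hx0 11, pow_nonneg hx0 12, pow_nonneg hx0 13, hx0]

lemma ineq_d3 (x : ℝ) (hx : 2 ≤ x) :
    (((x^2 - 1)^2*((3*x^5 - 10*x^3 + 7*x)/240) - 24*(x^2 - 1)*((3*x^7 - 21*x^5 + 49*x^3 - 31*x)/1344) + 144*((5*x^9 - 60*x^7 + 294*x^5 - 620*x^3 + 381*x)/11520)) * ((3*x^5 - 10*x^3 + 7*x)/240)) / (x^2 - x) ≤ 0.00111*x^12 := by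
  have hx0 : (0:ℝ) ≤ x - 2 := by linarith
  have hden : (0:ℝ) < x^2 - x := by nlinarith
  rw [div_le_iff₀ hden]
  nlinarith [pow_nonneg hx0 1, pow_nonneg hx0 2, pow_nonneg hx0 3, pow_nonneg hx0 4, pow_nonneg hx0 5, pow_nonneg hx0 6, pow_nonneg hx0 7, pow_nonneg hx0 8, pow_nonneg hx0 9, pow_nonneg hx0 10, pow_nonneg hx0 11, pow_nonneg hx0 12, pow_nonneg hx0 13, hx0]

lemma ineq_d5 (x : ℝ) (hx : 2 ≤ x) :
    (((x^2 - 1)^2*x - 24*(x^2 - 1)*(((x:ℝ)^3 - x)/12) + 144*((3*x^5 - 10*x^3 + 7*x)/240)) * ((3*x^5 - 10*x^3 + 7*x)/240)) / (x^2 - x) * ((x - 1)^4/16) ≤ 0.00111*x^12 := by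
  have hx0 : (0:ℝ) ≤ x - 2 := by linarith
  have hden : (0:ℝ) < x^2 - x := by nlinarith
  rw [div_mul_eq_mul_div, div_le_iff₀ hden]
  nlinarith [pow_nonneg hx0 1, pow_nonneg hx0 2, pow_nonneg hx0 3, pow_nonneg hx0 4, pow_nonneg hx0 5, pow_nonneg hx0 6, pow_nonneg hx0 7, pow_nonneg hx0 8, pow_nonneg hx0 9, pow_nonneg hx0 10, pow_nonneg hx0 11, pow_nonneg hx0 12, pow_nonneg hx0 13, hx0]

lemma rho_pow4_le (r : ℕ) (i : Fin r) :
    (((i : ℕ) : ℝ) + 1 - ((r : ℝ) + 1) / 2) ^ 4 ≤ ((r : ℝ) - 1)^4/16 := by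
  have h1 : ((i : ℕ) : ℝ) + 1 ≤ (r : ℝ) := by exact_mod_cast i.isLt
  have h0 : (0:ℝ) ≤ ((i : ℕ) : ℝ) := Nat.cast_nonneg _
  have hsq : (((i : ℕ) : ℝ) + 1 - ((r : ℝ) + 1) / 2) ^ 2 ≤ (((r : ℝ) - 1)/2)^2 := by nlinarith
  nlinarith [hsq, sq_nonneg (((i : ℕ) : ℝ) + 1 - ((r : ℝ) + 1) / 2)]

set_option maxHeartbeats 3000000 in
/-- **Lemma 3.7 (Gaunt–Reinert).** For `r ≥ 2` and all `j, q, t ∈ {1, …, r}`: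
`E[((r²−1) − 12ρ(j)²)² ρ(j)⁴] ≤ 3r⁸/140`, `E[((r²−1) − 12ρ(j)²)² ρ(q)⁴] ≤ 0.02440 r⁸`,
`E[((r²−1) − 12ρ(j)²)² ρ(j)²ρ(q)²] ≤ 0.02292 r⁸` and
`E[((r²−1) − 12ρ(j)²)² ρ(q)⁴ρ(t)⁴] ≤ 0.00111 r¹²`. -/
theorem rho_quadratic_combination_bounds (r : ℕ) (hr : 2 ≤ r) (j q t : Fin r) :
    (∫ p, (((r : ℝ) ^ 2 - 1) - 12 * (rho1 r j p) ^ 2) ^ 2 * (rho1 r j p) ^ 4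
        ∂(permMeasure r) ≤ 3 * (r : ℝ) ^ 8 / 140) ∧
    (∫ p, (((r : ℝ) ^ 2 - 1) - 12 * (rho1 r j p) ^ 2) ^ 2 * (rho1 r q p) ^ 4
        ∂(permMeasure r) ≤ 0.02440 * (r : ℝ) ^ 8) ∧
    (∫ p, (((r : ℝ) ^ 2 - 1) - 12 * (rho1 r j p) ^ 2) ^ 2
        * (rho1 r j p) ^ 2 * (rho1 r q p) ^ 2 ∂(permMeasure r)
      ≤ 0.02292 * (r : ℝ) ^ 8) ∧
    ∫ p, (((r : ℝ) ^ 2 - 1) - 12 * (rho1 r j p) ^ 2) ^ 2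
        * (rho1 r q p) ^ 4 * (rho1 r t p) ^ 4 ∂(permMeasure r)
      ≤ 0.00111 * (r : ℝ) ^ 12 := by
  have hr2 : (2 : ℝ) ≤ (r : ℝ) := by exact_mod_cast hr
  have hr0 : (0 : ℝ) ≤ (r : ℝ) := by linarith
  have hfpos : (0 : ℝ) < (r.factorial : ℝ) := by exact_mod_cast r.factorial_pos
  have hM2 : (∑ i : Fin r, (((i : ℕ) : ℝ) + 1 - ((r : ℝ) + 1) / 2) ^ 2) = (((r : ℝ):ℝ)^3 - (r : ℝ))/12 := by
    rw [Fin.sum_univ_eq_sum_range (fun k : ℕ => ((k : ℝ) + 1 - ((r : ℝ) + 1) / 2) ^ 2) r]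
    exact sum_rho_pow2 r
  have hM4 : (∑ i : Fin r, (((i : ℕ) : ℝ) + 1 - ((r : ℝ) + 1) / 2) ^ 4) = (3*(r : ℝ)^5 - 10*(r : ℝ)^3 + 7*(r : ℝ))/240 := by
    rw [Fin.sum_univ_eq_sum_range (fun k : ℕ => ((k : ℝ) + 1 - ((r : ℝ) + 1) / 2) ^ 4) r]
    exact sum_rho_pow4 r
  have hM6 : (∑ i : Fin r, (((i : ℕ) : ℝ) + 1 - ((r : ℝ) + 1) / 2) ^ 6) = (3*(r : ℝ)^7 - 21*(r : ℝ)^5 + 49*(r : ℝ)^3 - 31*(r : ℝ))/1344 := by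
    rw [Fin.sum_univ_eq_sum_range (fun k : ℕ => ((k : ℝ) + 1 - ((r : ℝ) + 1) / 2) ^ 6) r]
    exact sum_rho_pow6 r
  have hM8 : (∑ i : Fin r, (((i : ℕ) : ℝ) + 1 - ((r : ℝ) + 1) / 2) ^ 8) = (5*(r : ℝ)^9 - 60*(r : ℝ)^7 + 294*(r : ℝ)^5 - 620*(r : ℝ)^3 + 381*(r : ℝ))/11520 := by
    rw [Fin.sum_univ_eq_sum_range (fun k : ℕ => ((k : ℝ) + 1 - ((r : ℝ) + 1) / 2) ^ 8) r]
    exact sum_rho_pow8 r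
  have hM10 : (∑ i : Fin r, (((i : ℕ) : ℝ) + 1 - ((r : ℝ) + 1) / 2) ^ 10) = (3*(r : ℝ)^11 - 55*(r : ℝ)^9 + 462*(r : ℝ)^7 - 2046*(r : ℝ)^5 + 4191*(r : ℝ)^3 - 2555*(r : ℝ))/33792 := by
    rw [Fin.sum_univ_eq_sum_range (fun k : ℕ => ((k : ℝ) + 1 - ((r : ℝ) + 1) / 2) ^ 10) r]
    exact sum_rho_pow10 r
  have hM12 : (∑ i : Fin r, (((i : ℕ) : ℝ) + 1 - ((r : ℝ) + 1) / 2) ^ 12) = (105*(r : ℝ)^13 - 2730*(r : ℝ)^11 + 35035*(r : ℝ)^9 - 265980*(r : ℝ)^7 + 1144143*(r : ℝ)^5 - 2325050*(r : ℝ)^3 + 1414477*(r : ℝ))/5591040 := by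
    rw [Fin.sum_univ_eq_sum_range (fun k : ℕ => ((k : ℝ) + 1 - ((r : ℝ) + 1) / 2) ^ 12) r]
    exact sum_rho_pow12 r

  have hT0 : (∑ i : Fin r, (((r : ℝ) ^ 2 - 1) - 12 * (((i : ℕ) : ℝ) + 1 - ((r : ℝ) + 1) / 2) ^ 2) ^ 2) = (((r : ℝ)^2 - 1)^2*(r : ℝ) - 24*((r : ℝ)^2 - 1)*((((r : ℝ):ℝ)^3 - (r : ℝ))/12) + 144*((3*(r : ℝ)^5 - 10*(r : ℝ)^3 + 7*(r : ℝ))/240)) := by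
    rw [Finset.sum_congr rfl (fun (i : Fin r) _ => (by ring : (((r : ℝ) ^ 2 - 1) - 12 * (((i : ℕ) : ℝ) + 1 - ((r : ℝ) + 1) / 2) ^ 2) ^ 2 = ((r : ℝ) ^ 2 - 1)^2 - 24 * ((r : ℝ) ^ 2 - 1) * (((i : ℕ) : ℝ) + 1 - ((r : ℝ) + 1) / 2)^2 + 144 * (((i : ℕ) : ℝ) + 1 - ((r : ℝ) + 1) / 2)^4))]
    rw [Finset.sum_add_distrib, Finset.sum_sub_distrib]
    rw [Finset.sum_const, Finset.card_univ, Fintype.card_fin, nsmul_eq_mul]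
    rw [← Finset.mul_sum, ← Finset.mul_sum, hM2, hM4]
    ring

  have hT1 : (∑ i : Fin r, (((r : ℝ) ^ 2 - 1) - 12 * (((i : ℕ) : ℝ) + 1 - ((r : ℝ) + 1) / 2) ^ 2) ^ 2 * (((i : ℕ) : ℝ) + 1 - ((r : ℝ) + 1) / 2) ^ 4) = (((r : ℝ)^2 - 1)^2*((3*(r : ℝ)^5 - 10*(r : ℝ)^3 + 7*(r : ℝ))/240) - 24*((r : ℝ)^2 - 1)*((3*(r : ℝ)^7 - 21*(r : ℝ)^5 + 49*(r : ℝ)^3 - 31*(r : ℝ))/1344) + 144*((5*(r : ℝ)^9 - 60*(r : ℝ)^7 + 294*(r : ℝ)^5 - 620*(r : ℝ)^3 + 381*(r : ℝ))/11520)) := by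
    rw [Finset.sum_congr rfl (fun (i : Fin r) _ => (by ring : (((r : ℝ) ^ 2 - 1) - 12 * (((i : ℕ) : ℝ) + 1 - ((r : ℝ) + 1) / 2) ^ 2) ^ 2 * (((i : ℕ) : ℝ) + 1 - ((r : ℝ) + 1) / 2) ^ 4 = ((r : ℝ) ^ 2 - 1)^2 * (((i : ℕ) : ℝ) + 1 - ((r : ℝ) + 1) / 2)^4 - 24 * ((r : ℝ) ^ 2 - 1) * (((i : ℕ) : ℝ) + 1 - ((r : ℝ) + 1) / 2)^6 + 144 * (((i : ℕ) : ℝ) + 1 - ((r : ℝ) + 1) / 2)^8))]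
    rw [Finset.sum_add_distrib, Finset.sum_sub_distrib]
    rw [← Finset.mul_sum, ← Finset.mul_sum, ← Finset.mul_sum, hM4, hM6, hM8]

  have hT2 : (∑ i : Fin r, (((r : ℝ) ^ 2 - 1) - 12 * (((i : ℕ) : ℝ) + 1 - ((r : ℝ) + 1) / 2) ^ 2) ^ 2 * (((i : ℕ) : ℝ) + 1 - ((r : ℝ) + 1) / 2) ^ 2) = (((r : ℝ)^2 - 1)^2*((((r : ℝ):ℝ)^3 - (r : ℝ))/12) - 24*((r : ℝ)^2 - 1)*((3*(r : ℝ)^5 - 10*(r : ℝ)^3 + 7*(r : ℝ))/240) + 144*((3*(r : ℝ)^7 - 21*(r : ℝ)^5 + 49*(r : ℝ)^3 - 31*(r : ℝ))/1344)) := by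
    rw [Finset.sum_congr rfl (fun (i : Fin r) _ => (by ring : (((r : ℝ) ^ 2 - 1) - 12 * (((i : ℕ) : ℝ) + 1 - ((r : ℝ) + 1) / 2) ^ 2) ^ 2 * (((i : ℕ) : ℝ) + 1 - ((r : ℝ) + 1) / 2) ^ 2 = ((r : ℝ) ^ 2 - 1)^2 * (((i : ℕ) : ℝ) + 1 - ((r : ℝ) + 1) / 2)^2 - 24 * ((r : ℝ) ^ 2 - 1) * (((i : ℕ) : ℝ) + 1 - ((r : ℝ) + 1) / 2)^4 + 144 * (((i : ℕ) : ℝ) + 1 - ((r : ℝ) + 1) / 2)^6))]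
    rw [Finset.sum_add_distrib, Finset.sum_sub_distrib]
    rw [← Finset.mul_sum, ← Finset.mul_sum, ← Finset.mul_sum, hM2, hM4, hM6]

  have hT8 : (∑ i : Fin r, (((r : ℝ) ^ 2 - 1) - 12 * (((i : ℕ) : ℝ) + 1 - ((r : ℝ) + 1) / 2) ^ 2) ^ 2 * (((i : ℕ) : ℝ) + 1 - ((r : ℝ) + 1) / 2) ^ 4 * (((i : ℕ) : ℝ) + 1 - ((r : ℝ) + 1) / 2) ^ 4) = (((r : ℝ)^2 - 1)^2*((5*(r : ℝ)^9 - 60*(r : ℝ)^7 + 294*(r : ℝ)^5 - 620*(r : ℝ)^3 + 381*(r : ℝ))/11520) - 24*((r : ℝ)^2 - 1)*((3*(r : ℝ)^11 - 55*(r : ℝ)^9 + 462*(r : ℝ)^7 - 2046*(r : ℝ)^5 + 4191*(r : ℝ)^3 - 2555*(r : ℝ))/33792) + 144*((105*(r : ℝ)^13 - 2730*(r : ℝ)^11 + 35035*(r : ℝ)^9 - 265980*(r : ℝ)^7 + 1144143*(r : ℝ)^5 - 2325050*(r : ℝ)^3 + 1414477*(r : ℝ))/5591040)) := by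
    rw [Finset.sum_congr rfl (fun (i : Fin r) _ => (by ring : (((r : ℝ) ^ 2 - 1) - 12 * (((i : ℕ) : ℝ) + 1 - ((r : ℝ) + 1) / 2) ^ 2) ^ 2 * (((i : ℕ) : ℝ) + 1 - ((r : ℝ) + 1) / 2) ^ 4 * (((i : ℕ) : ℝ) + 1 - ((r : ℝ) + 1) / 2) ^ 4 = ((r : ℝ) ^ 2 - 1)^2 * (((i : ℕ) : ℝ) + 1 - ((r : ℝ) + 1) / 2)^8 - 24 * ((r : ℝ) ^ 2 - 1) * (((i : ℕ) : ℝ) + 1 - ((r : ℝ) + 1) / 2)^10 + 144 * (((i : ℕ) : ℝ) + 1 - ((r : ℝ) + 1) / 2)^12))]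
    rw [Finset.sum_add_distrib, Finset.sum_sub_distrib]
    rw [← Finset.mul_sum, ← Finset.mul_sum, ← Finset.mul_sum, hM8, hM10, hM12]

  have hT1b : (∑ i : Fin r, (((r : ℝ) ^ 2 - 1) - 12 * (((i : ℕ) : ℝ) + 1 - ((r : ℝ) + 1) / 2) ^ 2) ^ 2 * (((i : ℕ) : ℝ) + 1 - ((r : ℝ) + 1) / 2) ^ 2 * (((i : ℕ) : ℝ) + 1 - ((r : ℝ) + 1) / 2) ^ 2) = (((r : ℝ)^2 - 1)^2*((3*(r : ℝ)^5 - 10*(r : ℝ)^3 + 7*(r : ℝ))/240) - 24*((r : ℝ)^2 - 1)*((3*(r : ℝ)^7 - 21*(r : ℝ)^5 + 49*(r : ℝ)^3 - 31*(r : ℝ))/1344) + 144*((5*(r : ℝ)^9 - 60*(r : ℝ)^7 + 294*(r : ℝ)^5 - 620*(r : ℝ)^3 + 381*(r : ℝ))/11520)) := by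
    rw [Finset.sum_congr rfl (fun (i : Fin r) _ => (by ring : (((r : ℝ) ^ 2 - 1) - 12 * (((i : ℕ) : ℝ) + 1 - ((r : ℝ) + 1) / 2) ^ 2) ^ 2 * (((i : ℕ) : ℝ) + 1 - ((r : ℝ) + 1) / 2) ^ 2 * (((i : ℕ) : ℝ) + 1 - ((r : ℝ) + 1) / 2) ^ 2 = ((r : ℝ) ^ 2 - 1)^2 * (((i : ℕ) : ℝ) + 1 - ((r : ℝ) + 1) / 2)^4 - 24 * ((r : ℝ) ^ 2 - 1) * (((i : ℕ) : ℝ) + 1 - ((r : ℝ) + 1) / 2)^6 + 144 * (((i : ℕ) : ℝ) + 1 - ((r : ℝ) + 1) / 2)^8))]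
    rw [Finset.sum_add_distrib, Finset.sum_sub_distrib]
    rw [← Finset.mul_sum, ← Finset.mul_sum, ← Finset.mul_sum, hM4, hM6, hM8]

  have hM44 : (∑ i : Fin r, (((i : ℕ) : ℝ) + 1 - ((r : ℝ) + 1) / 2) ^ 4 * (((i : ℕ) : ℝ) + 1 - ((r : ℝ) + 1) / 2) ^ 4) = (5*(r : ℝ)^9 - 60*(r : ℝ)^7 + 294*(r : ℝ)^5 - 620*(r : ℝ)^3 + 381*(r : ℝ))/11520 := by
    rw [Finset.sum_congr rfl (fun (i : Fin r) _ => (by ring : (((i : ℕ) : ℝ) + 1 - ((r : ℝ) + 1) / 2) ^ 4 * (((i : ℕ) : ℝ) + 1 - ((r : ℝ) + 1) / 2) ^ 4 = (((i : ℕ) : ℝ) + 1 - ((r : ℝ) + 1) / 2) ^ 8))]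
    exact hM8
  have hFA2 : ∀ i : Fin r, (0:ℝ) ≤ (fun i : Fin r => (((r : ℝ) ^ 2 - 1) - 12 * (((i : ℕ) : ℝ) + 1 - ((r : ℝ) + 1) / 2) ^ 2) ^ 2) i := fun i => by positivity
  have hFT1 : ∀ i : Fin r, (0:ℝ) ≤ (fun i : Fin r => (((r : ℝ) ^ 2 - 1) - 12 * (((i : ℕ) : ℝ) + 1 - ((r : ℝ) + 1) / 2) ^ 2) ^ 2 * (((i : ℕ) : ℝ) + 1 - ((r : ℝ) + 1) / 2) ^ 4) i := fun i => by positivity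
  have hFT2 : ∀ i : Fin r, (0:ℝ) ≤ (fun i : Fin r => (((r : ℝ) ^ 2 - 1) - 12 * (((i : ℕ) : ℝ) + 1 - ((r : ℝ) + 1) / 2) ^ 2) ^ 2 * (((i : ℕ) : ℝ) + 1 - ((r : ℝ) + 1) / 2) ^ 2) i := fun i => by positivity
  have hH2 : ∀ i : Fin r, (0:ℝ) ≤ (fun i : Fin r => (((i : ℕ) : ℝ) + 1 - ((r : ℝ) + 1) / 2) ^ 2) i := fun i => by positivity
  have hH4 : ∀ i : Fin r, (0:ℝ) ≤ (fun i : Fin r => (((i : ℕ) : ℝ) + 1 - ((r : ℝ) + 1) / 2) ^ 4) i := fun i => by positivity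
  have hH44 : ∀ i : Fin r, (0:ℝ) ≤ (fun i : Fin r => (((i : ℕ) : ℝ) + 1 - ((r : ℝ) + 1) / 2) ^ 4 * (((i : ℕ) : ℝ) + 1 - ((r : ℝ) + 1) / 2) ^ 4) i := fun i => by positivity
  have key1 : ∀ j' : Fin r,
      ∫ p, (((r : ℝ) ^ 2 - 1) - 12 * (rho1 r j' p) ^ 2) ^ 2 * (rho1 r j' p) ^ 4
        ∂(permMeasure r) ≤ 3 * (r : ℝ) ^ 8 / 140 := by
    intro j'
    simp only [integral_permMeasure]
    refine le_trans (le_of_eq (single_avg r hr j' (fun i : Fin r => (((r : ℝ) ^ 2 - 1) - 12 * (((i : ℕ) : ℝ) + 1 - ((r : ℝ) + 1) / 2) ^ 2) ^ 2 * (((i : ℕ) : ℝ) + 1 - ((r : ℝ) + 1) / 2) ^ 4))) ?_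
    rw [hT1]
    exact ineq_a (r : ℝ) hr2
  refine ⟨key1 j, ?_, ?_, ?_⟩
  · -- part 2
    by_cases hjq : j = q
    · subst hjq
      refine le_trans (key1 j) ?_
      nlinarith [pow_nonneg hr0 8]
    · simp only [integral_permMeasure]
      refine le_trans (pair_avg_le r hr j q hjq (fun i : Fin r => (((r : ℝ) ^ 2 - 1) - 12 * (((i : ℕ) : ℝ) + 1 - ((r : ℝ) + 1) / 2) ^ 2) ^ 2) (fun i : Fin r => (((i : ℕ) : ℝ) + 1 - ((r : ℝ) + 1) / 2) ^ 4) hFA2 hH4) ?_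
      rw [hT0, hM4]
      exact ineq_b (r : ℝ) hr2
  · -- part 3
    by_cases hjq : j = q
    · subst hjq
      simp only [integral_permMeasure]
      refine le_trans (le_of_eq (single_avg r hr j (fun i : Fin r => (((r : ℝ) ^ 2 - 1) - 12 * (((i : ℕ) : ℝ) + 1 - ((r : ℝ) + 1) / 2) ^ 2) ^ 2 * (((i : ℕ) : ℝ) + 1 - ((r : ℝ) + 1) / 2) ^ 2 * (((i : ℕ) : ℝ) + 1 - ((r : ℝ) + 1) / 2) ^ 2))) ?_
      rw [hT1b]
      refine le_trans (ineq_a (r : ℝ) hr2) ?_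
      nlinarith [pow_nonneg hr0 8]
    · simp only [integral_permMeasure]
      refine le_trans (pair_avg_le r hr j q hjq (fun i : Fin r => (((r : ℝ) ^ 2 - 1) - 12 * (((i : ℕ) : ℝ) + 1 - ((r : ℝ) + 1) / 2) ^ 2) ^ 2 * (((i : ℕ) : ℝ) + 1 - ((r : ℝ) + 1) / 2) ^ 2) (fun i : Fin r => (((i : ℕ) : ℝ) + 1 - ((r : ℝ) + 1) / 2) ^ 2) hFT2 hH2) ?_
      rw [hT2, hM2]
      exact ineq_c (r : ℝ) hr2
  · -- part 4
    simp only [integral_permMeasure]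
    by_cases hqt : q = t
    · subst hqt
      by_cases hjq : j = q
      · subst hjq
        refine le_trans (le_of_eq (single_avg r hr j (fun i : Fin r => (((r : ℝ) ^ 2 - 1) - 12 * (((i : ℕ) : ℝ) + 1 - ((r : ℝ) + 1) / 2) ^ 2) ^ 2 * (((i : ℕ) : ℝ) + 1 - ((r : ℝ) + 1) / 2) ^ 4 * (((i : ℕ) : ℝ) + 1 - ((r : ℝ) + 1) / 2) ^ 4))) ?_
        rw [hT8]
        exact ineq_d1 (r : ℝ) hr2
      · have hsum : (∑ g : Equiv.Perm (Fin r),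
            (((r : ℝ) ^ 2 - 1) - 12 * (((g j : ℕ) : ℝ) + 1 - ((r : ℝ) + 1) / 2) ^ 2) ^ 2 * (((g q : ℕ) : ℝ) + 1 - ((r : ℝ) + 1) / 2) ^ 4 * (((g q : ℕ) : ℝ) + 1 - ((r : ℝ) + 1) / 2) ^ 4)
            = ∑ g : Equiv.Perm (Fin r), (fun i : Fin r => (((r : ℝ) ^ 2 - 1) - 12 * (((i : ℕ) : ℝ) + 1 - ((r : ℝ) + 1) / 2) ^ 2) ^ 2) (g j) * (fun i : Fin r => (((i : ℕ) : ℝ) + 1 - ((r : ℝ) + 1) / 2) ^ 4 * (((i : ℕ) : ℝ) + 1 - ((r : ℝ) + 1) / 2) ^ 4) (g q) :=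
          Finset.sum_congr rfl (fun (g : Equiv.Perm (Fin r)) _ => by ring)
        refine le_trans (le_of_eq (congrArg (fun S => S / (r.factorial : ℝ)) hsum)) ?_
        refine le_trans (pair_avg_le r hr j q hjq (fun i : Fin r => (((r : ℝ) ^ 2 - 1) - 12 * (((i : ℕ) : ℝ) + 1 - ((r : ℝ) + 1) / 2) ^ 2) ^ 2) (fun i : Fin r => (((i : ℕ) : ℝ) + 1 - ((r : ℝ) + 1) / 2) ^ 4 * (((i : ℕ) : ℝ) + 1 - ((r : ℝ) + 1) / 2) ^ 4) hFA2 hH44) ?_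
        rw [hT0, hM44]
        exact ineq_d2 (r : ℝ) hr2
    · by_cases hjq : j = q
      · subst hjq
        refine le_trans (pair_avg_le r hr j t hqt (fun i : Fin r => (((r : ℝ) ^ 2 - 1) - 12 * (((i : ℕ) : ℝ) + 1 - ((r : ℝ) + 1) / 2) ^ 2) ^ 2 * (((i : ℕ) : ℝ) + 1 - ((r : ℝ) + 1) / 2) ^ 4) (fun i : Fin r => (((i : ℕ) : ℝ) + 1 - ((r : ℝ) + 1) / 2) ^ 4) hFT1 hH4) ?_
        rw [hT1, hM4]
        exact ineq_d3 (r : ℝ) hr2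
      · by_cases hjt : j = t
        · subst hjt
          have hsum : (∑ g : Equiv.Perm (Fin r),
              (((r : ℝ) ^ 2 - 1) - 12 * (((g j : ℕ) : ℝ) + 1 - ((r : ℝ) + 1) / 2) ^ 2) ^ 2 * (((g q : ℕ) : ℝ) + 1 - ((r : ℝ) + 1) / 2) ^ 4 * (((g j : ℕ) : ℝ) + 1 - ((r : ℝ) + 1) / 2) ^ 4)
              = ∑ g : Equiv.Perm (Fin r), (fun i : Fin r => (((r : ℝ) ^ 2 - 1) - 12 * (((i : ℕ) : ℝ) + 1 - ((r : ℝ) + 1) / 2) ^ 2) ^ 2 * (((i : ℕ) : ℝ) + 1 - ((r : ℝ) + 1) / 2) ^ 4) (g j) * (fun i : Fin r => (((i : ℕ) : ℝ) + 1 - ((r : ℝ) + 1) / 2) ^ 4) (g q) :=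
            Finset.sum_congr rfl (fun (g : Equiv.Perm (Fin r)) _ => by ring)
          refine le_trans (le_of_eq (congrArg (fun S => S / (r.factorial : ℝ)) hsum)) ?_
          refine le_trans (pair_avg_le r hr j q hjq (fun i : Fin r => (((r : ℝ) ^ 2 - 1) - 12 * (((i : ℕ) : ℝ) + 1 - ((r : ℝ) + 1) / 2) ^ 2) ^ 2 * (((i : ℕ) : ℝ) + 1 - ((r : ℝ) + 1) / 2) ^ 4) (fun i : Fin r => (((i : ℕ) : ℝ) + 1 - ((r : ℝ) + 1) / 2) ^ 4) hFT1 hH4) ?_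
          rw [hT1, hM4]
          exact ineq_d3 (r : ℝ) hr2
        · -- all distinct
          rw [div_le_iff₀ hfpos]
          have hle : (∑ g : Equiv.Perm (Fin r),
              (fun i : Fin r => (((r : ℝ) ^ 2 - 1) - 12 * (((i : ℕ) : ℝ) + 1 - ((r : ℝ) + 1) / 2) ^ 2) ^ 2) (g j) * (fun i : Fin r => (((i : ℕ) : ℝ) + 1 - ((r : ℝ) + 1) / 2) ^ 4) (g q) * (((g t : ℕ) : ℝ) + 1 - ((r : ℝ) + 1) / 2) ^ 4)
              ≤ (∑ g : Equiv.Perm (Fin r), (fun i : Fin r => (((r : ℝ) ^ 2 - 1) - 12 * (((i : ℕ) : ℝ) + 1 - ((r : ℝ) + 1) / 2) ^ 2) ^ 2) (g j) * (fun i : Fin r => (((i : ℕ) : ℝ) + 1 - ((r : ℝ) + 1) / 2) ^ 4) (g q))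
                * (((r : ℝ) - 1)^4/16) := by
            rw [Finset.sum_mul]
            refine Finset.sum_le_sum fun g _ => ?_
            exact mul_le_mul_of_nonneg_left (rho_pow4_le r (g t))
              (mul_nonneg (hFA2 (g j)) (hH4 (g q)))
          have hpair : (∑ g : Equiv.Perm (Fin r), (fun i : Fin r => (((r : ℝ) ^ 2 - 1) - 12 * (((i : ℕ) : ℝ) + 1 - ((r : ℝ) + 1) / 2) ^ 2) ^ 2) (g j) * (fun i : Fin r => (((i : ℕ) : ℝ) + 1 - ((r : ℝ) + 1) / 2) ^ 4) (g q))
              ≤ ((((r : ℝ)^2 - 1)^2*(r : ℝ) - 24*((r : ℝ)^2 - 1)*((((r : ℝ):ℝ)^3 - (r : ℝ))/12) + 144*((3*(r : ℝ)^5 - 10*(r : ℝ)^3 + 7*(r : ℝ))/240)) * ((3*(r : ℝ)^5 - 10*(r : ℝ)^3 + 7*(r : ℝ))/240)) / ((r : ℝ)^2 - (r : ℝ)) * (r.factorial : ℝ) := by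
            rw [← div_le_iff₀ hfpos]
            refine le_trans (pair_avg_le r hr j q hjq (fun i : Fin r => (((r : ℝ) ^ 2 - 1) - 12 * (((i : ℕ) : ℝ) + 1 - ((r : ℝ) + 1) / 2) ^ 2) ^ 2) (fun i : Fin r => (((i : ℕ) : ℝ) + 1 - ((r : ℝ) + 1) / 2) ^ 4) hFA2 hH4) ?_
            rw [hT0, hM4]
          have hM16 : (0:ℝ) ≤ ((r : ℝ) - 1)^4/16 := by positivity
          calc (∑ g : Equiv.Perm (Fin r), (fun i : Fin r => (((r : ℝ) ^ 2 - 1) - 12 * (((i : ℕ) : ℝ) + 1 - ((r : ℝ) + 1) / 2) ^ 2) ^ 2) (g j) * (fun i : Fin r => (((i : ℕ) : ℝ) + 1 - ((r : ℝ) + 1) / 2) ^ 4) (g q) * (((g t : ℕ) : ℝ) + 1 - ((r : ℝ) + 1) / 2) ^ 4)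
              ≤ (∑ g : Equiv.Perm (Fin r), (fun i : Fin r => (((r : ℝ) ^ 2 - 1) - 12 * (((i : ℕ) : ℝ) + 1 - ((r : ℝ) + 1) / 2) ^ 2) ^ 2) (g j) * (fun i : Fin r => (((i : ℕ) : ℝ) + 1 - ((r : ℝ) + 1) / 2) ^ 4) (g q))
                * (((r : ℝ) - 1)^4/16) := hle
            _ ≤ (((((r : ℝ)^2 - 1)^2*(r : ℝ) - 24*((r : ℝ)^2 - 1)*((((r : ℝ):ℝ)^3 - (r : ℝ))/12) + 144*((3*(r : ℝ)^5 - 10*(r : ℝ)^3 + 7*(r : ℝ))/240)) * ((3*(r : ℝ)^5 - 10*(r : ℝ)^3 + 7*(r : ℝ))/240)) / ((r : ℝ)^2 - (r : ℝ)) * (r.factorial : ℝ))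
                * (((r : ℝ) - 1)^4/16) :=
              mul_le_mul_of_nonneg_right hpair hM16
            _ = (((((r : ℝ)^2 - 1)^2*(r : ℝ) - 24*((r : ℝ)^2 - 1)*((((r : ℝ):ℝ)^3 - (r : ℝ))/12) + 144*((3*(r : ℝ)^5 - 10*(r : ℝ)^3 + 7*(r : ℝ))/240)) * ((3*(r : ℝ)^5 - 10*(r : ℝ)^3 + 7*(r : ℝ))/240)) / ((r : ℝ)^2 - (r : ℝ)) * (((r : ℝ) - 1)^4/16))
                * (r.factorial : ℝ) := by ring
            _ ≤ 0.00111*(r : ℝ)^12 * (r.factorial : ℝ) :=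
              mul_le_mul_of_nonneg_right (ineq_d5 (r : ℝ) hr2) hfpos.le
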